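/- Let K ⊆ ℝ² be a nonempty compact convex set and let r ≥ 0. Define K_r := {x ∈ ℝ² : infDist(x, K) ≤ r}. Then K_r is a nonempty compact convex set and per(K_r) = per(K) + 2πr. -/

import Mathlib

open Real Set

noncomputable def per (S : Set (EuclideanSpace ℝ (Fin 2))) : ℝ :=
  ∫ θ in (0:ℝ)..π,
    (sSup ((fun p => p 0 * Real.cos θ + p 1 * Real.sin θ) '' S) -
     sInf ((fun p => p 0 * Real.cos θ + p 1 * Real.sin θ) '' S))

def IsPartition (P P1 P2 : Set (EuclideanSpace ℝ (Fin 2))) : Prop :=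
  P1.Nonempty ∧ P2.Nonempty ∧ Disjoint P1 P2 ∧ P1 ∪ P2 = P

def Separates (u : EuclideanSpace ℝ (Fin 2)) (c : ℝ)
    (P1 P2 : Set (EuclideanSpace ℝ (Fin 2))) : Prop :=
  (∀ p ∈ P1, (inner ℝ p u : ℝ) ≤ c) ∧ (∀ q ∈ P2, c ≤ (inner ℝ q u : ℝ))

/-- The separation distance between the convex hulls of `A` and `B`. -/
noncomputable def sepDist (A B : Set (EuclideanSpace ℝ (Fin 2))) : ℝ :=
  sInf (Set.image2 dist (convexHull ℝ A) (convexHull ℝ B))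

/-- The unit direction vector at angle `θ`. -/
noncomputable def dir (θ : ℝ) : EuclideanSpace ℝ (Fin 2) :=
  (WithLp.equiv 2 (Fin 2 → ℝ)).symm ![Real.cos θ, Real.sin θ]

lemma dir_apply_zero (θ : ℝ) : dir θ 0 = Real.cos θ := rfl

lemma dir_apply_one (θ : ℝ) : dir θ 1 = Real.sin θ := rfl

lemma norm_dir (θ : ℝ) : ‖dir θ‖ = 1 := by
  rw [EuclideanSpace.norm_eq]
  rw [Fin.sum_univ_two, dir_apply_zero, dir_apply_one]
  simp only [Real.norm_eq_abs, sq_abs]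
  rw [Real.cos_sq_add_sin_sq, Real.sqrt_one]

lemma inner_dir (θ : ℝ) (p : EuclideanSpace ℝ (Fin 2)) :
    (inner ℝ p (dir θ) : ℝ) = p 0 * Real.cos θ + p 1 * Real.sin θ := by
  rw [PiLp.inner_apply]
  simp [Fin.sum_univ_two, dir_apply_zero, dir_apply_one]
  ring

lemma f_eq (θ : ℝ) :
    (fun p : EuclideanSpace ℝ (Fin 2) => p 0 * Real.cos θ + p 1 * Real.sin θ)
      = fun p => (inner ℝ p (dir θ) : ℝ) := by
  funext p; rw [inner_dir]

lemma continuous_f (θ : ℝ) :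
    Continuous (fun p : EuclideanSpace ℝ (Fin 2) =>
      p 0 * Real.cos θ + p 1 * Real.sin θ) := by
  rw [f_eq]
  exact (innerSL ℝ (dir θ)).continuous.comp (continuous_id)
    |>.congr (fun p => by rw [real_inner_comm]; rfl)

theorem per_neighborhood_of_convex
    (K : Set (EuclideanSpace ℝ (Fin 2))) (hne : K.Nonempty)
    (hK : IsCompact K) (hconv : Convex ℝ K) (r : ℝ) (hr : 0 ≤ r) :
    ({x : EuclideanSpace ℝ (Fin 2) | Metric.infDist x K ≤ r}).Nonempty ∧
    IsCompact {x : EuclideanSpace ℝ (Fin 2) | Metric.infDist x K ≤ r} ∧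
    Convex ℝ {x : EuclideanSpace ℝ (Fin 2) | Metric.infDist x K ≤ r} ∧
    per {x : EuclideanSpace ℝ (Fin 2) | Metric.infDist x K ≤ r} = per K + 2 * π * r := by
  set Kr := {x : EuclideanSpace ℝ (Fin 2) | Metric.infDist x K ≤ r} with hKrdef
  have hsub : K ⊆ Kr := fun x hx => by
    simp only [hKrdef, mem_setOf_eq, Metric.infDist_zero_of_mem hx]; exact hr
  have hKrne : Kr.Nonempty := hne.mono hsub
  have hKr_eq : Kr = Metric.cthickening r K := by
    ext x
    rw [Metric.mem_cthickening_iff, hKrdef, mem_setOf_eq, Metric.infDist,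
      ← ENNReal.le_ofReal_iff_toReal_le (Metric.infEdist_ne_top hne) hr]
  have hKrc : IsCompact Kr := hKr_eq ▸ hK.cthickening
  have hKrconv : Convex ℝ Kr := hKr_eq ▸ hconv.cthickening r
  refine ⟨hKrne, hKrc, hKrconv, ?_⟩
  -- support function shifts
  set f : ℝ → EuclideanSpace ℝ (Fin 2) → ℝ :=
    fun θ p => p 0 * Real.cos θ + p 1 * Real.sin θ with hf
  have hmem : ∀ θ (k : EuclideanSpace ℝ (Fin 2)), k ∈ K → k + r • dir θ ∈ Kr ∧
      k - r • dir θ ∈ Kr := by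
    intro θ k hk
    constructor <;>
    · simp only [hKrdef, mem_setOf_eq]
      refine le_trans (Metric.infDist_le_dist_of_mem hk) ?_
      simp [dist_eq_norm, norm_smul, norm_dir, abs_of_nonneg hr]
  have hSup : ∀ θ, sSup (f θ '' Kr) = sSup (f θ '' K) + r := by
    intro θ
    have hc := continuous_f θ
    apply le_antisymm
    · apply csSup_le ((hKrne.image _))
      rintro y ⟨x, hx, rfl⟩
      obtain ⟨k, hk, hdk⟩ := hK.exists_infDist_eq_dist hne x
      have hdist : dist x k ≤ r := hdk ▸ hx
      have h1 : f θ x - f θ k = (inner ℝ (x - k) (dir θ) : ℝ) := by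
        rw [inner_dir]; simp [hf]; ring
      have h2 : f θ x - f θ k ≤ r := by
        rw [h1]
        calc (inner ℝ (x - k) (dir θ) : ℝ) ≤ ‖x - k‖ * ‖dir θ‖ := real_inner_le_norm _ _
        _ ≤ r := by rw [norm_dir, mul_one, ← dist_eq_norm]; exact hdist
      have h3 : f θ k ≤ sSup (f θ '' K) :=
        le_csSup (hK.bddAbove_image hc.continuousOn) (mem_image_of_mem _ hk)
      linarith
    · obtain ⟨k, hk, hsup⟩ := hK.exists_sSup_image_eq hne hc.continuousOn
      have hx := (hmem θ k hk).1
      have hfx : f θ (k + r • dir θ) = f θ k + r := by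
        simp only [hf, PiLp.add_apply, PiLp.smul_apply, smul_eq_mul,
          dir_apply_zero, dir_apply_one]
        linear_combination r * (Real.sin_sq_add_cos_sq θ)
      calc sSup (f θ '' K) + r = f θ (k + r • dir θ) := by rw [hsup, hfx]
      _ ≤ sSup (f θ '' Kr) :=
        le_csSup (hKrc.bddAbove_image hc.continuousOn) (mem_image_of_mem _ hx)
  have hInf : ∀ θ, sInf (f θ '' Kr) = sInf (f θ '' K) - r := by
    intro θ
    have hc := continuous_f θ
    apply le_antisymm
    · obtain ⟨k, hk, hinf⟩ := hK.exists_sInf_image_eq hne hc.continuousOn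
      have hx := (hmem θ k hk).2
      have hfx : f θ (k - r • dir θ) = f θ k - r := by
        simp only [hf, PiLp.sub_apply, PiLp.smul_apply, smul_eq_mul,
          dir_apply_zero, dir_apply_one]
        linear_combination (-r) * (Real.sin_sq_add_cos_sq θ)
      calc sInf (f θ '' Kr) ≤ f θ (k - r • dir θ) :=
        csInf_le (hKrc.bddBelow_image hc.continuousOn) (mem_image_of_mem _ hx)
      _ = sInf (f θ '' K) - r := by rw [hfx, hinf]
    · apply le_csInf ((hKrne.image _))
      rintro y ⟨x, hx, rfl⟩
      obtain ⟨k, hk, hdk⟩ := hK.exists_infDist_eq_dist hne x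
      have hdist : dist x k ≤ r := hdk ▸ hx
      have h2 : f θ k - f θ x ≤ r := by
        have h1 : f θ k - f θ x = (inner ℝ (k - x) (dir θ) : ℝ) := by
          rw [inner_dir]; simp [hf]; ring
        rw [h1]
        calc (inner ℝ (k - x) (dir θ) : ℝ) ≤ ‖k - x‖ * ‖dir θ‖ := real_inner_le_norm _ _
        _ ≤ r := by
          rw [norm_dir, mul_one, ← dist_eq_norm, dist_comm]; exact hdist
      have h3 : sInf (f θ '' K) ≤ f θ k :=
        csInf_le (hK.bddBelow_image hc.continuousOn) (mem_image_of_mem _ hk)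
      linarith
  -- continuity of the support functions in θ
  have hcont2 : Continuous (Function.uncurry f) := by
    apply Continuous.add
    · exact (((continuous_apply 0).comp (PiLp.continuous_ofLp 2 _)).comp continuous_snd).mul
        (Real.continuous_cos.comp continuous_fst)
    · exact (((continuous_apply 1).comp (PiLp.continuous_ofLp 2 _)).comp continuous_snd).mul
        (Real.continuous_sin.comp continuous_fst)
  have hScont : Continuous fun θ => sSup (f θ '' K) := hK.continuous_sSup hcont2
  have hIcont : Continuous fun θ => sInf (f θ '' K) := hK.continuous_sInf hcont2
  have hint : IntervalIntegrable (fun θ => sSup (f θ '' K) - sInf (f θ '' K))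
      MeasureTheory.volume 0 π := ((hScont.sub hIcont).intervalIntegrable 0 π)
  show per Kr = per K + 2 * π * r
  unfold per
  have : ∀ θ : ℝ, sSup (f θ '' Kr) - sInf (f θ '' Kr)
      = (sSup (f θ '' K) - sInf (f θ '' K)) + 2 * r := by
    intro θ; rw [hSup θ, hInf θ]; ring
  calc (∫ θ in (0:ℝ)..π, (sSup (f θ '' Kr) - sInf (f θ '' Kr)))
      = ∫ θ in (0:ℝ)..π, ((sSup (f θ '' K) - sInf (f θ '' K)) + 2 * r) := by
        apply intervalIntegral.integral_congr; intro θ _; exact this θ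
    _ = (∫ θ in (0:ℝ)..π, (sSup (f θ '' K) - sInf (f θ '' K)))
        + ∫ θ in (0:ℝ)..π, (2 * r : ℝ) := by
        rw [intervalIntegral.integral_add hint (intervalIntegrable_const)]
    _ = per K + 2 * π * r := by
        rw [intervalIntegral.integral_const]; unfold per; simp; ring
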